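/- Let G be a connected multigraph on vertex set {0,1,…,n} (n ≥ 1) with root 0 and edge-weight function ω_G. Then the number of G-parking functions equals ∑_{T ∈ SPT(G)} ∏_{e ∈ E(T)} ω_G(e), the sum over all spanning trees T of G of the product of the G-edge-weights of the edges of T. -/

import Mathlib

/-- `deg^G_U(i) = ∑_{j ∉ U} ω(i,j)`. -/
def degOut {n : ℕ} (ω : Fin (n + 1) → Fin (n + 1) → ℕ) (U : Finset (Fin (n + 1)))
    (i : Fin (n + 1)) : ℕ :=
  ∑ j ∈ Uᶜ, ω i j

/-- The multigraph with edge-weight function `ω` on `{0,…,n}` is connected: for every nonempty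
`U ⊆ {1,…,n}` some `i ∈ U` has `deg^G_U(i) ≥ 1`. -/
def ConnMG {n : ℕ} (ω : Fin (n + 1) → Fin (n + 1) → ℕ) : Prop :=
  ∀ U : Finset (Fin (n + 1)), U.Nonempty → (0 : Fin (n + 1)) ∉ U →
    ∃ i ∈ U, 1 ≤ degOut ω U i

/-- `α` is a `G`-parking function (the nonroot vertex `i+1` carries value `α i`): for every
nonempty `U ⊆ {1,…,n}` there is `i ∈ U` with `α_i ≤ deg^G_U(i) − 1`,
i.e. `α_i + 1 ≤ deg^G_U(i)`. -/
def IsGPF (n : ℕ) (ω : Fin (n + 1) → Fin (n + 1) → ℕ) (α : Fin n → ℕ) : Prop :=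
  ∀ U : Finset (Fin (n + 1)), U.Nonempty → (0 : Fin (n + 1)) ∉ U →
    ∃ i : Fin n, i.succ ∈ U ∧ α i + 1 ≤ degOut ω U i.succ

/-- Spanning trees of `G` rooted at `0`, encoded by parent functions: `par 0 = 0`, iterating
`par` from any vertex reaches the root `0`, and each edge `{v, par v}` of the tree is an edge
of `G` (has positive weight). -/
def SPTset (n : ℕ) (ω : Fin (n + 1) → Fin (n + 1) → ℕ) :
    Set (Fin (n + 1) → Fin (n + 1)) :=
  {par | par 0 = 0 ∧ (∀ v, ∃ m : ℕ, par^[m] v = 0) ∧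
    ∀ v, v ≠ 0 → (par v ≠ v ∧ 1 ≤ ω v (par v))}

namespace GPFproof
open scoped Classical

variable {n : ℕ}

/-- number of edges from `v` to the list `ℓ` (with multiplicity). -/
def dsum (ω : Fin (n+1) → Fin (n+1) → ℕ) (v : Fin (n+1)) (ℓ : List (Fin (n+1))) : ℕ :=
  (ℓ.map (ω v)).sum

/-- the next vertex to burn: least unburnt eligible vertex (junk `0` if none). -/
noncomputable def nxt (E : Fin (n+1) → List (Fin (n+1)) → Prop)
    (ℓ : List (Fin (n+1))) : Fin (n+1) :=
  if h : (Finset.univ.filter (fun v => v ∉ ℓ ∧ E v ℓ)).Nonempty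
  then (Finset.univ.filter (fun v => v ∉ ℓ ∧ E v ℓ)).min' h else 0

/-- burnt list after `k` steps. -/
noncomputable def burn (E : Fin (n+1) → List (Fin (n+1)) → Prop) : ℕ → List (Fin (n+1))
  | 0 => [0]
  | (k+1) => burn E k ++ [nxt E (burn E k)]

lemma burn_length (E : Fin (n+1) → List (Fin (n+1)) → Prop) (k : ℕ) :
    (burn E k).length = k + 1 := by
  induction k with
  | zero => rfl
  | succ k ih => simp [burn, ih]

lemma burn_zero_mem (E : Fin (n+1) → List (Fin (n+1)) → Prop) (k : ℕ) :
    (0 : Fin (n+1)) ∈ burn E k := by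
  induction k with
  | zero => simp [burn]
  | succ k ih => simp [burn, ih]

lemma burn_prefix (E : Fin (n+1) → List (Fin (n+1)) → Prop) {k m : ℕ} (h : k ≤ m) :
    burn E k <+: burn E m := by
  induction m with
  | zero => simp [Nat.le_zero.mp h]
  | succ m ih =>
    rcases Nat.lt_or_ge k (m+1) with h' | h'
    · exact (ih (Nat.lt_succ_iff.mp h')).trans ⟨[nxt E (burn E m)], rfl⟩
    · have : k = m + 1 := le_antisymm h h'
      simp [this]

/-- progress: from any nodup burnt list containing `0` that is not everything,
some unburnt vertex is eligible. -/
def Progress (E : Fin (n+1) → List (Fin (n+1)) → Prop) : Prop :=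
  ∀ ℓ : List (Fin (n+1)), ℓ.Nodup → (0 : Fin (n+1)) ∈ ℓ → ℓ.length < n + 1 →
    ∃ v, v ∉ ℓ ∧ E v ℓ

lemma burn_step {E : Fin (n+1) → List (Fin (n+1)) → Prop} (hE : Progress E) :
    ∀ k, k ≤ n → (burn E k).Nodup ∧
      (∀ j < k, (nxt E (burn E j) ∉ burn E j ∧ E (nxt E (burn E j)) (burn E j) ∧
        ∀ w, w ∉ burn E j → E w (burn E j) → nxt E (burn E j) ≤ w)) := by
  intro k
  induction k with
  | zero => exact fun _ => ⟨List.nodup_singleton _, fun j hj => absurd hj (Nat.not_lt_zero j)⟩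
  | succ k ih =>
    intro hk
    obtain ⟨hnd, hstep⟩ := ih (Nat.le_of_succ_le hk)
    have hne : (Finset.univ.filter (fun v => v ∉ burn E k ∧ E v (burn E k))).Nonempty := by
      have h := hE (burn E k) hnd (burn_zero_mem E k) (by rw [burn_length]; omega)
      obtain ⟨v, hv1, hv2⟩ := h
      exact ⟨v, by simp [hv1, hv2]⟩
    have hmem := Finset.min'_mem _ hne
    rw [Finset.mem_filter] at hmem
    have hnxt : nxt E (burn E k) ∉ burn E k ∧ E (nxt E (burn E k)) (burn E k) := by
      rw [nxt, dif_pos hne]; exact hmem.2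
    refine ⟨?_, ?_⟩
    · rw [burn]
      refine List.Nodup.append hnd (List.nodup_singleton _) ?_
      intro a ha hb
      rw [List.mem_singleton] at hb
      exact hnxt.1 (hb ▸ ha)
    · intro j hj
      rcases Nat.lt_or_ge j k with h' | h'
      · exact hstep j h'
      · have : j = k := le_antisymm (Nat.lt_succ_iff.mp hj) h'
        subst this
        refine ⟨hnxt.1, hnxt.2, ?_⟩
        intro w hw1 hw2
        rw [nxt, dif_pos hne]
        exact Finset.min'_le _ _ (by simp [hw1, hw2])

lemma burn_nodup {E : Fin (n+1) → List (Fin (n+1)) → Prop} (hE : Progress E) :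
    (burn E n).Nodup := (burn_step hE n le_rfl).1

lemma burn_complete {E : Fin (n+1) → List (Fin (n+1)) → Prop} (hE : Progress E)
    (v : Fin (n+1)) : v ∈ burn E n := by
  have hnd := burn_nodup hE
  have hlen := burn_length E n
  have : (burn E n).toFinset = Finset.univ := by
    apply Finset.eq_univ_of_card
    rw [List.toFinset_card_of_nodup hnd, hlen, Fintype.card_fin]
  rw [← List.mem_toFinset, this]
  exact Finset.mem_univ v



section Indexing

variable (E : Fin (n+1) → List (Fin (n+1)) → Prop) (ω : Fin (n+1) → Fin (n+1) → ℕ)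

/-- index of `v` in the full burn list. -/
noncomputable def idx (v : Fin (n+1)) : ℕ := (burn E n).idxOf v

/-- edges from `v` to the first `m` burnt vertices. -/
noncomputable def S (v : Fin (n+1)) (m : ℕ) : ℕ := (((burn E n).map (ω v)).take m).sum

variable {E}

lemma burn_eq_take {k : ℕ} (hk : k ≤ n) : burn E k = (burn E n).take (k+1) := by
  have h := burn_prefix E hk
  rw [List.prefix_iff_eq_take] at h
  rw [h, burn_length]

lemma idx_lt (hE : Progress E) (v : Fin (n+1)) : idx E v < n + 1 := by
  have := List.idxOf_lt_length_iff.mpr (burn_complete hE v)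
  rwa [burn_length] at this

lemma getElem_idx (hE : Progress E) (v : Fin (n+1)) :
    (burn E n)[idx E v]'(by rw [burn_length]; exact idx_lt hE v) = v :=
  List.getElem_idxOf (by rw [burn_length]; exact idx_lt hE v)

lemma getElem_congr' {α : Type*} {l : List α} {a b : ℕ} (h : a = b) (ha : a < l.length) :
    l[a]'ha = l[b]'(h ▸ ha) := by subst h; rfl

lemma idx_getElem (hE : Progress E) {m : ℕ} (hm : m < n + 1) :
    idx E ((burn E n)[m]'(by rwa [burn_length])) = m := by
  have h1 : m < (burn E n).length := by rwa [burn_length]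
  exact ((burn_nodup hE).getElem_inj_iff).mp (getElem_idx hE ((burn E n)[m]'h1))

lemma getElem_burn_zero (hE : Progress E) :
    (burn E n)[0]'(by rw [burn_length]; omega) = 0 := by
  have h0 : (burn E n).take 1 = [(0 : Fin (n+1))] := by
    rw [← burn_eq_take (Nat.zero_le n)]; rfl
  have h2 : ((burn E n).take 1)[0]'(by simp [h0]) = (burn E n)[0]'(by rw [burn_length]; omega) :=
    List.getElem_take
  rw [← h2]
  simp [h0]

lemma idx_zero (hE : Progress E) : idx E (0 : Fin (n+1)) = 0 := by
  conv_lhs => rw [← getElem_burn_zero hE]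
  exact idx_getElem hE (by omega)

lemma mem_take_iff_idx (hE : Progress E) (v : Fin (n+1)) {k : ℕ} (hk : k ≤ n + 1) :
    v ∈ (burn E n).take k ↔ idx E v < k := by
  constructor
  · intro h
    obtain ⟨i, hi, hgi⟩ := List.getElem_of_mem h
    have hilen : i < (burn E n).length := by
      have := List.length_take (i := k) (l := burn E n)
      omega
    rw [List.getElem_take] at hgi
    have := idx_getElem hE (by rw [burn_length] at hilen; exact hilen)
    rw [hgi] at this
    rw [this]
    simp at hi; omega
  · intro h
    have hvlen : idx E v < (burn E n).length := by rw [burn_length]; exact idx_lt hE v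
    have hklen : idx E v < ((burn E n).take k).length := by
      rw [List.length_take]; rw [burn_length] at hvlen ⊢; omega
    have : ((burn E n).take k)[idx E v]'hklen = v := by
      rw [List.getElem_take]; exact getElem_idx hE v
    rw [← this]; exact List.getElem_mem _

lemma dsum_burn (v : Fin (n+1)) {k : ℕ} (hk : k ≤ n) :
    dsum ω v (burn E k) = S E ω v (k+1) := by
  rw [burn_eq_take hk, dsum, S, List.map_take]

lemma S_zero (v : Fin (n+1)) : S E ω v 0 = 0 := by simp [S]

lemma S_succ (hE : Progress E) (v : Fin (n+1)) {m : ℕ} (hm : m < n + 1) :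
    S E ω v (m+1) = S E ω v m + ω v ((burn E n)[m]'(by rwa [burn_length])) := by
  have hlen : m < ((burn E n).map (ω v)).length := by rw [List.length_map, burn_length]; omega
  rw [S, S, List.sum_take_succ _ _ hlen]
  congr 1
  rw [List.getElem_map]

lemma S_mono (v : Fin (n+1)) {m m' : ℕ} (h : m ≤ m') : S E ω v m ≤ S E ω v m' := by
  have hpre : ((burn E n).map (ω v)).take m <+: ((burn E n).map (ω v)).take m' := by
    rw [List.prefix_take_iff]
    exact ⟨List.take_prefix _ _, le_trans (by simp) h⟩
  obtain ⟨t, ht⟩ := hpre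
  rw [S, S, ← ht, List.sum_append]
  omega

lemma nxt_eq_getElem (hE : Progress E) {k : ℕ} (hk : k < n) :
    nxt E (burn E k) = (burn E n)[k+1]'(by rw [burn_length]; omega) := by
  have h1 : burn E (k+1) = (burn E n).take (k+2) := burn_eq_take (by omega)
  have h2 : burn E k = (burn E n).take (k+1) := burn_eq_take (by omega)
  have h3 : (burn E n).take (k+2) = (burn E n).take (k+1) ++ [(burn E n)[k+1]'(by rw [burn_length]; omega)] := by
    rw [List.take_succ]
    congr 1
    rw [List.getElem?_eq_getElem (by rw [burn_length]; omega)]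
    rfl
  have : burn E k ++ [nxt E (burn E k)] = burn E k ++ [(burn E n)[k+1]'(by rw [burn_length]; omega)] := by
    rw [← burn, h1, h3, h2]
  simpa using this

lemma idx_of_ne_zero (hE : Progress E) {v : Fin (n+1)} (hv : v ≠ 0) :
    1 ≤ idx E v := by
  rcases Nat.eq_zero_or_pos (idx E v) with h | h
  · exfalso
    apply hv
    have := getElem_idx hE v
    have h0 := getElem_burn_zero hE
    rw [← this]
    rw [getElem_congr' h]
    exact h0
  · exact h

/-- the vertex at position `idx v` was chosen by `nxt` from the burnt list of length `idx v`. -/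
lemma burn_choice (hE : Progress E) {v : Fin (n+1)} (hv : v ≠ 0) :
    v = nxt E (burn E (idx E v - 1)) ∧ idx E v - 1 < n := by
  have h1 := idx_of_ne_zero hE hv
  have h2 := idx_lt hE v
  have hlt : idx E v - 1 < n := by omega
  refine ⟨?_, hlt⟩
  rw [nxt_eq_getElem hE hlt]
  have h3 : idx E v - 1 + 1 = idx E v := by omega
  rw [getElem_congr' h3]
  exact (getElem_idx hE v).symm

end Indexing

section Elig

variable (ω : Fin (n+1) → Fin (n+1) → ℕ)

/-- extend `α : Fin n → ℕ` to all vertices (value `0` at root, unused). -/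
noncomputable def αx (α : Fin n → ℕ) (v : Fin (n+1)) : ℕ :=
  if h : v = 0 then 0 else α (v.pred h)

lemma αx_succ (α : Fin n → ℕ) (i : Fin n) : αx α i.succ = α i := by
  rw [αx, dif_neg (Fin.succ_ne_zero i), Fin.pred_succ]

/-- eligibility for the parking-function burning process. -/
def eligA (α : Fin n → ℕ) (v : Fin (n+1)) (ℓ : List (Fin (n+1))) : Prop :=
  v ≠ 0 ∧ αx α v + 1 ≤ dsum ω v ℓ

/-- eligibility for the tree burning process. -/
def eligT (par : Fin (n+1) → Fin (n+1)) (v : Fin (n+1)) (ℓ : List (Fin (n+1))) : Prop :=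
  v ≠ 0 ∧ par v ∈ ℓ

lemma dsum_eq_degOut {ℓ : List (Fin (n+1))} (hnd : ℓ.Nodup) (v : Fin (n+1)) :
    dsum ω v ℓ = degOut ω ℓ.toFinsetᶜ v := by
  rw [dsum, degOut, compl_compl, List.sum_toFinset _ hnd]

lemma exists_not_mem {ℓ : List (Fin (n+1))} (hnd : ℓ.Nodup) (hlen : ℓ.length < n + 1) :
    ∃ v : Fin (n+1), v ∉ ℓ := by
  by_contra h
  push_neg at h
  have : (Finset.univ : Finset (Fin (n+1))) ⊆ ℓ.toFinset := fun v _ => List.mem_toFinset.mpr (h v)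
  have hc := Finset.card_le_card this
  rw [List.toFinset_card_of_nodup hnd, Finset.card_univ, Fintype.card_fin] at hc
  omega

lemma progressA {α : Fin n → ℕ} (hα : IsGPF n ω α) : Progress (eligA ω α) := by
  intro ℓ hnd h0 hlen
  have hU : (ℓ.toFinsetᶜ : Finset (Fin (n+1))).Nonempty := by
    obtain ⟨v, hv⟩ := exists_not_mem hnd hlen
    exact ⟨v, by simp [hv]⟩
  have h0U : (0 : Fin (n+1)) ∉ (ℓ.toFinsetᶜ : Finset (Fin (n+1))) := by simp [h0]
  obtain ⟨i, hiU, hile⟩ := hα _ hU h0U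
  refine ⟨i.succ, ?_, Fin.succ_ne_zero i, ?_⟩
  · intro hmem
    rw [Finset.mem_compl, List.mem_toFinset] at hiU
    exact hiU hmem
  · rw [αx_succ, dsum_eq_degOut ω hnd]
    exact hile

lemma progressT {par : Fin (n+1) → Fin (n+1)} (hpar : par ∈ SPTset n ω) :
    Progress (eligT par) := by
  intro ℓ hnd h0 hlen
  obtain ⟨u, hu⟩ := exists_not_mem hnd hlen
  have hex : ∃ m : ℕ, par^[m] u ∈ ℓ := by
    obtain ⟨m, hm⟩ := hpar.2.1 u
    exact ⟨m, hm ▸ h0⟩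
  classical
  let m := Nat.find hex
  have hm : par^[m] u ∈ ℓ := Nat.find_spec hex
  have hm0 : m ≠ 0 := by
    intro h
    rw [h] at hm
    exact hu hm
  have hprev : par^[m-1] u ∉ ℓ := Nat.find_min hex (by omega)
  refine ⟨par^[m-1] u, hprev, ?_, ?_⟩
  · intro h
    rw [h] at hprev
    exact hprev h0
  · have : par^[m] u = par (par^[m-1] u) := by
      conv_lhs => rw [show m = (m-1) + 1 by omega]
      rw [Function.iterate_succ_apply']
    rwa [← this]

end Elig

section Decode

variable (E : Fin (n+1) → List (Fin (n+1)) → Prop) (ω : Fin (n+1) → Fin (n+1) → ℕ)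

noncomputable def mIdx (α : Fin n → ℕ) (v : Fin (n+1)) : ℕ :=
  Nat.findGreatest (fun m => S E ω v m ≤ αx α v) (idx E v)

noncomputable def parD (α : Fin n → ℕ) (v : Fin (n+1)) : Fin (n+1) :=
  if v = 0 then 0 else (burn E n).getD (mIdx E ω α v) 0

noncomputable def cD (α : Fin n → ℕ) (v : Fin (n+1)) : ℕ :=
  αx α v - S E ω v (mIdx E ω α v)

noncomputable def αEnc (par : Fin (n+1) → Fin (n+1)) (c : Fin (n+1) → ℕ) (v : Fin (n+1)) : ℕ :=
  S E ω v (idx E (par v)) + c v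

/-- the key compatibility relation between a tree-with-multiplicities and a vertex labeling. -/
def Rel (par : Fin (n+1) → Fin (n+1)) (c : Fin (n+1) → ℕ) (α : Fin n → ℕ) : Prop :=
  ∀ v : Fin (n+1), v ≠ 0 →
    idx E (par v) < idx E v ∧ αx α v = S E ω v (idx E (par v)) + c v ∧ c v < ω v (par v)

variable {E ω}

lemma ne_zero_of_not_mem_burn {k : ℕ} {v : Fin (n+1)} (h : v ∉ burn E k) : v ≠ 0 :=
  fun h0 => h (h0 ▸ burn_zero_mem E k)

/-- under `Rel`, the two eligibility predicates agree along the process of `E`. -/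
lemma elig_iff (hE : Progress E) {par c α} (hrel : Rel E ω par c α)
    {k : ℕ} (hk : k ≤ n) {v : Fin (n+1)} (hv : v ∉ burn E k) :
    eligA ω α v (burn E k) ↔ eligT par v (burn E k) := by
  have hv0 : v ≠ 0 := ne_zero_of_not_mem_burn hv
  obtain ⟨hdec, heq, hc⟩ := hrel v hv0
  have htake : burn E k = (burn E n).take (k+1) := burn_eq_take hk
  have hvt : ¬ (idx E v < k + 1) := by
    intro h
    exact hv (htake ▸ (mem_take_iff_idx hE v (by omega)).mpr h)
  have hmemiff : par v ∈ burn E k ↔ idx E (par v) < k + 1 := by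
    rw [htake]; exact mem_take_iff_idx hE (par v) (by omega)
  have hds : dsum ω v (burn E k) = S E ω v (k+1) := dsum_burn ω v hk
  constructor
  · rintro ⟨-, hle⟩
    refine ⟨hv0, hmemiff.mpr ?_⟩
    by_contra hp
    push_neg at hp
    have : S E ω v (k+1) ≤ S E ω v (idx E (par v)) := S_mono ω v hp
    rw [hds] at hle
    omega
  · rintro ⟨-, hmem⟩
    have hp : idx E (par v) < k + 1 := hmemiff.mp hmem
    have hplt : idx E (par v) < n + 1 := by omega
    have hS1 : S E ω v (idx E (par v) + 1) =
        S E ω v (idx E (par v)) + ω v ((burn E n)[idx E (par v)]'(by rw [burn_length]; omega)) :=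
      S_succ ω hE v hplt
    rw [getElem_idx hE (par v)] at hS1
    have : S E ω v (idx E (par v) + 1) ≤ S E ω v (k+1) := S_mono ω v (by omega)
    exact ⟨hv0, by rw [hds]; omega⟩

/-- processes driven by predicates that agree along the first process coincide. -/
lemma burn_congr {E₂ : Fin (n+1) → List (Fin (n+1)) → Prop}
    (hiff : ∀ k < n, ∀ v, v ∉ burn E k → (E v (burn E k) ↔ E₂ v (burn E k))) :
    ∀ k ≤ n, burn E₂ k = burn E k := by
  intro k
  induction k with
  | zero => intro _; rfl
  | succ k ih =>
    intro hk
    have hb := ih (by omega)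
    have hfil : (Finset.univ.filter (fun v => v ∉ burn E k ∧ E₂ v (burn E k))) =
        (Finset.univ.filter (fun v => v ∉ burn E k ∧ E v (burn E k))) := by
      apply Finset.ext
      intro v
      simp only [Finset.mem_filter, Finset.mem_univ, true_and]
      constructor
      · rintro ⟨h1, h2⟩; exact ⟨h1, (hiff k (by omega) v h1).mpr h2⟩
      · rintro ⟨h1, h2⟩; exact ⟨h1, (hiff k (by omega) v h1).mp h2⟩
    have hnxt : nxt E₂ (burn E k) = nxt E (burn E k) := by
      rw [nxt, nxt, hfil]
    rw [burn, burn, hb, hnxt]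

lemma nxt_spec (hE : Progress E) {k : ℕ} (hk : k < n) :
    nxt E (burn E k) ∉ burn E k ∧ E (nxt E (burn E k)) (burn E k) := by
  obtain ⟨h1, h2, -⟩ := (burn_step hE n le_rfl).2 k hk
  exact ⟨h1, h2⟩

/-- eligibility of each burnt vertex at its burning time. -/
lemma elig_at_burn_time (hE : Progress E) (hsel : ∀ k < n, E (nxt E (burn E k)) (burn E k))
    {v : Fin (n+1)} (hv : v ≠ 0) : E v (burn E (idx E v - 1)) := by
  obtain ⟨h1, h2⟩ := burn_choice hE hv
  have := hsel _ h2
  rwa [← h1] at this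

/-- if every vertex is `eligA`-eligible at its burning time, `α` is a parking function. -/
lemma isGPF_of_elig (hE : Progress E) {α : Fin n → ℕ}
    (hel : ∀ v : Fin (n+1), v ≠ 0 → eligA ω α v (burn E (idx E v - 1))) :
    IsGPF n ω α := by
  intro U hU h0U
  obtain ⟨v, hvU, hmin⟩ := Finset.exists_min_image U (idx E) hU
  have hv0 : v ≠ 0 := fun h => h0U (h ▸ hvU)
  obtain ⟨-, hle⟩ := hel v hv0
  set k := idx E v - 1 with hkdef
  have hk : k ≤ n := by have := idx_lt hE v; omega
  have hknd : (burn E k).Nodup := by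
    have := burn_prefix E (show k ≤ n by omega)
    exact (burn_nodup hE).sublist this.sublist
  have hsub : (burn E k).toFinset ⊆ Uᶜ := by
    intro w hw
    rw [List.mem_toFinset] at hw
    rw [Finset.mem_compl]
    intro hwU
    have h1 : idx E v ≥ 1 := idx_of_ne_zero hE hv0
    have : w ∈ (burn E n).take (k+1) := burn_eq_take hk ▸ hw
    have hwlt : idx E w < k + 1 := (mem_take_iff_idx hE w (by omega)).mp this
    have := hmin w hwU
    omega
  have hdle : dsum ω v (burn E k) ≤ degOut ω U v := by
    rw [dsum, degOut, ← List.sum_toFinset _ hknd]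
    exact Finset.sum_le_sum_of_subset hsub
  refine ⟨v.pred hv0, ?_, ?_⟩
  · rwa [Fin.succ_pred]
  · rw [← αx_succ α (v.pred hv0), Fin.succ_pred]
    calc αx α v + 1 ≤ dsum ω v (burn E k) := hle
    _ ≤ degOut ω U v := by rw [← Fin.succ_pred v hv0] at hdle ⊢; exact hdle
  
end Decode

section Spec

variable {ω : Fin (n+1) → Fin (n+1) → ℕ}

lemma decode_spec {α : Fin n → ℕ} (hα : IsGPF n ω α) :
    Rel (eligA ω α) ω (parD (eligA ω α) ω α) (cD (eligA ω α) ω α) α := by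
  set E := eligA ω α with hEdef
  have hE : Progress E := progressA ω hα
  intro v hv
  have hel : eligA ω α v (burn E (idx E v - 1)) :=
    elig_at_burn_time hE (fun k hk => (nxt_spec hE hk).2) hv
  have hidxge := idx_of_ne_zero hE hv
  have hidxlt := idx_lt hE v
  have hkn : idx E v - 1 ≤ n := by omega
  have hSt : αx α v + 1 ≤ S E ω v (idx E v) := by
    have := hel.2
    rw [dsum_burn ω v hkn] at this
    have h1 : idx E v - 1 + 1 = idx E v := by omega
    rwa [h1] at this
  have hmle : mIdx E ω α v ≤ idx E v :=
    Nat.findGreatest_le (P := fun m => S E ω v m ≤ αx α v) _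
  have hPm : S E ω v (mIdx E ω α v) ≤ αx α v :=
    Nat.findGreatest_spec (P := fun m => S E ω v m ≤ αx α v) (Nat.zero_le _)
      (by show S E ω v 0 ≤ αx α v; rw [S_zero]; omega)
  have hmlt : mIdx E ω α v < idx E v := by
    rcases Nat.lt_or_ge (mIdx E ω α v) (idx E v) with h | h
    · exact h
    · exfalso
      have h2 : mIdx E ω α v = idx E v := by omega
      rw [h2] at hPm
      omega
  have hnP : ¬ (S E ω v (mIdx E ω α v + 1) ≤ αx α v) :=
    Nat.findGreatest_is_greatest (P := fun m => S E ω v m ≤ αx α v)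
      (Nat.lt_succ_self _) (by omega)
  have hmn : mIdx E ω α v < n + 1 := by omega
  have hS1 : S E ω v (mIdx E ω α v + 1) =
      S E ω v (mIdx E ω α v) + ω v ((burn E n)[mIdx E ω α v]'(by rw [burn_length]; omega)) :=
    S_succ ω hE v hmn
  have hparD : parD E ω α v = (burn E n)[mIdx E ω α v]'(by rw [burn_length]; omega) := by
    rw [parD, if_neg hv]
    exact List.getD_eq_getElem _ _ (by rw [burn_length]; omega)
  have hidxp : idx E (parD E ω α v) = mIdx E ω α v := by
    rw [hparD]; exact idx_getElem hE hmn
  refine ⟨by omega, ?_, ?_⟩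
  · rw [hidxp, cD]
    omega
  · rw [cD, hparD]
    omega

lemma rel_iterate {E : Fin (n+1) → List (Fin (n+1)) → Prop} (hE : Progress E)
    {par : Fin (n+1) → Fin (n+1)}
    (hdec : ∀ v, v ≠ 0 → idx E (par v) < idx E v) : ∀ v, ∃ m : ℕ, par^[m] v = 0 := by
  intro v
  obtain ⟨k, hk⟩ : ∃ k, idx E v = k := ⟨_, rfl⟩
  induction k using Nat.strong_induction_on generalizing v with
  | _ k IH =>
    by_cases h : v = 0
    · exact ⟨0, h⟩
    · obtain ⟨m, hm⟩ := IH (idx E (par v)) (hk ▸ hdec v h) (par v) rfl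
      exact ⟨m+1, by rwa [Function.iterate_succ_apply]⟩

lemma rel_par_mem_SPT {E : Fin (n+1) → List (Fin (n+1)) → Prop} (hE : Progress E)
    {par c α} (hrel : Rel E ω par c α)
    (hroot : par 0 = 0) : par ∈ SPTset n ω := by
  refine ⟨hroot, rel_iterate hE (fun v hv => (hrel v hv).1), ?_⟩
  intro v hv
  obtain ⟨hdec, heq, hc⟩ := hrel v hv
  constructor
  · intro h
    rw [h] at hdec
    omega
  · omega

lemma encode_spec {par : Fin (n+1) → Fin (n+1)} (hpar : par ∈ SPTset n ω)
    {c : Fin (n+1) → ℕ} (hc : ∀ v, v ≠ 0 → c v < ω v (par v)) :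
    Rel (eligT par) ω par c (fun i => αEnc (eligT par) ω par c i.succ) := by
  set E := eligT par with hEdef
  have hE : Progress E := progressT ω hpar
  intro v hv
  have hel : eligT par v (burn E (idx E v - 1)) :=
    elig_at_burn_time hE (fun k hk => (nxt_spec hE hk).2) hv
  have hidxge := idx_of_ne_zero hE hv
  have hidxlt := idx_lt hE v
  have hkn : idx E v - 1 ≤ n := by omega
  have hmem : par v ∈ (burn E n).take (idx E v - 1 + 1) := burn_eq_take hkn ▸ hel.2
  have hdec : idx E (par v) < idx E v := by
    have := (mem_take_iff_idx hE (par v) (by omega)).mp hmem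
    omega
  refine ⟨hdec, ?_, hc v hv⟩
  rw [αx, dif_neg hv]
  show αEnc E ω par c (v.pred hv).succ = _
  rw [Fin.succ_pred]
  rfl

lemma idx_congr {E E₂ : Fin (n+1) → List (Fin (n+1)) → Prop}
    (h : burn E₂ n = burn E n) : idx E₂ = (idx E : Fin (n+1) → ℕ) := by
  funext v
  rw [idx, idx, h]

lemma S_congr {E E₂ : Fin (n+1) → List (Fin (n+1)) → Prop}
    (h : burn E₂ n = burn E n) : S E₂ ω = S E ω := by
  funext v m
  rw [S, S, h]

end Spec

section Round

variable {ω : Fin (n+1) → Fin (n+1) → ℕ}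

lemma parD_root {E : Fin (n+1) → List (Fin (n+1)) → Prop} (α : Fin n → ℕ) :
    parD E ω α 0 = 0 := by rw [parD, if_pos rfl]

lemma round1 {α : Fin n → ℕ} (hα : IsGPF n ω α) :
    parD (eligA ω α) ω α ∈ SPTset n ω ∧
    (∀ v, v ≠ 0 → cD (eligA ω α) ω α v < ω v (parD (eligA ω α) ω α v)) ∧
    (∀ v, v ≠ 0 → αEnc (eligT (parD (eligA ω α) ω α)) ω (parD (eligA ω α) ω α)
      (cD (eligA ω α) ω α) v = αx α v) := by
  have hE : Progress (eligA ω α) := progressA ω hα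
  have hrel := decode_spec hα
  have hroot : parD (eligA ω α) ω α 0 = 0 := parD_root α
  have hSPT := rel_par_mem_SPT hE hrel hroot
  have hbn : burn (eligT (parD (eligA ω α) ω α)) n = burn (eligA ω α) n :=
    burn_congr (fun k hk v hv => elig_iff hE hrel (le_of_lt hk) hv) n le_rfl
  refine ⟨hSPT, fun v hv => (hrel v hv).2.2, fun v hv => ?_⟩
  rw [αEnc, idx_congr hbn, S_congr hbn]
  exact ((hrel v hv).2.1).symm

lemma round2 {par : Fin (n+1) → Fin (n+1)} (hpar : par ∈ SPTset n ω)
    {c : Fin (n+1) → ℕ} (hc : ∀ v, v ≠ 0 → c v < ω v (par v)) :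
    IsGPF n ω (fun i => αEnc (eligT par) ω par c i.succ) ∧
    parD (eligA ω (fun i => αEnc (eligT par) ω par c i.succ)) ω
      (fun i => αEnc (eligT par) ω par c i.succ) = par ∧
    (∀ v, v ≠ 0 → cD (eligA ω (fun i => αEnc (eligT par) ω par c i.succ)) ω
      (fun i => αEnc (eligT par) ω par c i.succ) v = c v) := by
  have hE : Progress (eligT par) := progressT ω hpar
  have hrel : Rel (eligT par) ω par c (fun i => αEnc (eligT par) ω par c i.succ) :=
    encode_spec hpar hc
  have hel : ∀ v : Fin (n+1), v ≠ 0 →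
      eligA ω (fun i => αEnc (eligT par) ω par c i.succ) v
        (burn (eligT par) (idx (eligT par) v - 1)) := by
    intro v hv
    obtain ⟨hch, hlt⟩ := burn_choice hE hv
    have hnm : v ∉ burn (eligT par) (idx (eligT par) v - 1) := by
      have := (nxt_spec hE hlt).1
      rwa [← hch] at this
    have hT : eligT par v (burn (eligT par) (idx (eligT par) v - 1)) :=
      elig_at_burn_time hE (fun k hk => (nxt_spec hE hk).2) hv
    exact (elig_iff hE hrel (le_of_lt hlt) hnm).mpr hT
  have hβ : IsGPF n ω (fun i => αEnc (eligT par) ω par c i.succ) := isGPF_of_elig hE hel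
  have hbn : burn (eligA ω (fun i => αEnc (eligT par) ω par c i.succ)) n =
      burn (eligT par) n :=
    burn_congr (fun k hk v hv => ((elig_iff hE hrel (le_of_lt hk) hv)).symm) n le_rfl
  have key : ∀ v : Fin (n+1), v ≠ 0 →
      parD (eligA ω (fun i => αEnc (eligT par) ω par c i.succ)) ω
        (fun i => αEnc (eligT par) ω par c i.succ) v = par v ∧
      cD (eligA ω (fun i => αEnc (eligT par) ω par c i.succ)) ω
        (fun i => αEnc (eligT par) ω par c i.succ) v = c v := by
    intro v hv
    obtain ⟨hdec, heq, hcv⟩ := hrel v hv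
    have hplt : idx (eligT par) (par v) < n + 1 := by have := idx_lt hE v; omega
    have hm : mIdx (eligA ω (fun i => αEnc (eligT par) ω par c i.succ)) ω
        (fun i => αEnc (eligT par) ω par c i.succ) v =
        Nat.findGreatest (fun m => S (eligT par) ω v m ≤
          αx (fun i => αEnc (eligT par) ω par c i.succ) v) (idx (eligT par) v) := by
      rw [mIdx, S_congr hbn, idx_congr hbn]
    have hS1 : S (eligT par) ω v (idx (eligT par) (par v) + 1) =
        S (eligT par) ω v (idx (eligT par) (par v)) +
          ω v ((burn (eligT par) n)[idx (eligT par) (par v)]'(by rw [burn_length]; omega)) :=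
      S_succ ω hE v hplt
    rw [getElem_idx hE (par v)] at hS1
    have hge : idx (eligT par) (par v) ≤ Nat.findGreatest (fun m => S (eligT par) ω v m ≤
        αx (fun i => αEnc (eligT par) ω par c i.succ) v) (idx (eligT par) v) :=
      Nat.le_findGreatest (le_of_lt hdec)
        (by show S (eligT par) ω v (idx (eligT par) (par v)) ≤ _; rw [heq]; omega)
    have hle : Nat.findGreatest (fun m => S (eligT par) ω v m ≤
        αx (fun i => αEnc (eligT par) ω par c i.succ) v) (idx (eligT par) v) ≤
        idx (eligT par) (par v) := by
      by_contra h
      push_neg at h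
      have hPF : S (eligT par) ω v (Nat.findGreatest (fun m => S (eligT par) ω v m ≤
          αx (fun i => αEnc (eligT par) ω par c i.succ) v) (idx (eligT par) v)) ≤
          αx (fun i => αEnc (eligT par) ω par c i.succ) v :=
        Nat.findGreatest_spec
          (P := fun m => S (eligT par) ω v m ≤
            αx (fun i => αEnc (eligT par) ω par c i.succ) v) (Nat.zero_le _)
          (by show S (eligT par) ω v 0 ≤ _; rw [S_zero]; omega)
      have : S (eligT par) ω v (idx (eligT par) (par v) + 1) ≤
          S (eligT par) ω v (Nat.findGreatest (fun m => S (eligT par) ω v m ≤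
            αx (fun i => αEnc (eligT par) ω par c i.succ) v) (idx (eligT par) v)) :=
        S_mono ω v (by omega)
      omega
    have hmeq : mIdx (eligA ω (fun i => αEnc (eligT par) ω par c i.succ)) ω
        (fun i => αEnc (eligT par) ω par c i.succ) v = idx (eligT par) (par v) := by
      rw [hm]; omega
    constructor
    · rw [parD, if_neg hv, hmeq, hbn, List.getD_eq_getElem _ _ (by rw [burn_length]; omega)]
      exact getElem_idx hE (par v)
    · rw [cD, hmeq, S_congr hbn, heq]
      omega
  refine ⟨hβ, ?_, fun v hv => (key v hv).2⟩
  funext v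
  by_cases hv : v = 0
  · rw [hv, parD_root, hpar.1]
  · exact (key v hv).1

end Round

section Main

variable (ω : Fin (n+1) → Fin (n+1) → ℕ)

noncomputable def cx (c : Fin n → ℕ) (v : Fin (n+1)) : ℕ :=
  if h : v = 0 then 0 else c (v.pred h)

lemma cx_succ (c : Fin n → ℕ) (i : Fin n) : cx c i.succ = c i := by
  rw [cx, dif_neg (Fin.succ_ne_zero i), Fin.pred_succ]

lemma cx_bound {par : Fin (n+1) → Fin (n+1)} {c : Fin n → ℕ}
    (hc : ∀ i, c i < ω i.succ (par i.succ)) :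
    ∀ v, v ≠ 0 → cx c v < ω v (par v) := by
  intro v hv
  rw [cx, dif_neg hv]
  have := hc (v.pred hv)
  rwa [Fin.succ_pred] at this

noncomputable def mainEquiv :
    {α : Fin n → ℕ // IsGPF n ω α} ≃
    {pc : (Fin (n+1) → Fin (n+1)) × (Fin n → ℕ) //
      pc.1 ∈ SPTset n ω ∧ ∀ i : Fin n, pc.2 i < ω i.succ (pc.1 i.succ)} where
  toFun a := ⟨(parD (eligA ω a.1) ω a.1, fun i => cD (eligA ω a.1) ω a.1 i.succ),
    (round1 a.2).1, fun i => (round1 a.2).2.1 i.succ (Fin.succ_ne_zero i)⟩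
  invFun t := ⟨fun i => αEnc (eligT t.1.1) ω t.1.1 (cx t.1.2) i.succ,
    (round2 t.2.1 (cx_bound ω t.2.2)).1⟩
  left_inv := by
    rintro ⟨α, hα⟩
    apply Subtype.ext
    funext i
    show αEnc (eligT (parD (eligA ω α) ω α)) ω (parD (eligA ω α) ω α)
      (cx (fun j => cD (eligA ω α) ω α j.succ)) i.succ = α i
    rw [αEnc, cx_succ]
    have h := (round1 hα).2.2 i.succ (Fin.succ_ne_zero i)
    rw [αEnc] at h
    rw [h, αx_succ]
  right_inv := by
    rintro ⟨⟨par, c⟩, hSPT, hc⟩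
    apply Subtype.ext
    have h2 := round2 (ω := ω) hSPT (cx_bound ω hc)
    refine Prod.ext h2.2.1 ?_
    funext i
    show cD _ ω _ i.succ = c i
    rw [h2.2.2 i.succ (Fin.succ_ne_zero i), cx_succ]

noncomputable def sigmaEquiv :
    {pc : (Fin (n+1) → Fin (n+1)) × (Fin n → ℕ) //
      pc.1 ∈ SPTset n ω ∧ ∀ i : Fin n, pc.2 i < ω i.succ (pc.1 i.succ)} ≃
    Σ p : (SPTset n ω), (∀ i : Fin n, Fin (ω i.succ (p.1 i.succ))) where
  toFun t := ⟨⟨t.1.1, t.2.1⟩, fun i => ⟨t.1.2 i, t.2.2 i⟩⟩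
  invFun s := ⟨(s.1.1, fun i => (s.2 i).1), s.1.2, fun i => (s.2 i).2⟩
  left_inv t := rfl
  right_inv s := rfl

lemma card_eq :
    Nat.card {α : Fin n → ℕ // IsGPF n ω α} =
      ∑ᶠ par ∈ SPTset n ω, ∏ i : Fin n, ω i.succ (par i.succ) := by
  haveI : Fintype (SPTset n ω) := (Set.toFinite _).fintype
  rw [Nat.card_congr ((mainEquiv ω).trans (sigmaEquiv ω))]
  rw [Nat.card_eq_fintype_card, Fintype.card_sigma]
  rw [finsum_mem_eq_toFinset_sum]
  simp only [Fintype.card_pi, Fintype.card_fin]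
  exact Finset.sum_set_coe
    (f := fun par : Fin (n+1) → Fin (n+1) => ∏ i : Fin n, ω i.succ (par i.succ)) _

end Main

end GPFproof

/-- Matrix-tree fact: `#PF(G) = ∑_{T ∈ SPT(G)} ∏_{e ∈ E(T)} ω_G(e)` (the edges of a spanning
tree are the pairs `{v, par v}` for nonroot `v`). -/
theorem stmt5 (n : ℕ) (hn : 1 ≤ n) (ω : Fin (n + 1) → Fin (n + 1) → ℕ)
    (hsymm : ∀ i j, ω i j = ω j i) (hdiag : ∀ i, ω i i = 0) (hconn : ConnMG ω) :
    Set.ncard {α : Fin n → ℕ | IsGPF n ω α} =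
      ∑ᶠ par ∈ SPTset n ω, ∏ i : Fin n, ω i.succ (par i.succ) := by
  rw [← Nat.card_coe_set_eq]
  rw [← GPFproof.card_eq ω]
  apply Nat.card_congr
  exact Equiv.subtypeEquivRight (fun α => by simp)
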